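/- Let P : ℝ^{n} → ℝ^{n×n} be continuous with symmetric positive definite values, and suppose there are a positive non-increasing function p̲ and a non-decreasing function p̄ with p̲(|e|) I ≤ P(e) ≤ p̄(|e|) I for all e. Then the Riemannian distance to the origin satisfies √(p̲(|e|)) |e| ≤ d_P(e, 0) ≤ √(p̄(|e|)) |e| for all e in ℝ^{n}. -/

import Mathlib

open Real Set Filter
open scoped RealInnerProductSpace Topology

/-- Euclidean state space ℝⁿ. -/
abbrev Euc (n : ℕ) := EuclideanSpace ℝ (Fin n)

/-- Riemannian length (for the metric P) of the path s ↦ γ(s), s ∈ [0,1]. -/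
noncomputable def pathLength {n : ℕ} (P : Euc n → Euc n →L[ℝ] Euc n)
    (γ : ℝ → Euc n) : ℝ :=
  ∫ s in (0:ℝ)..1, Real.sqrt ⟪P (γ s) (deriv γ s), deriv γ s⟫

/-- Riemannian distance associated with the metric P: the infimum of the lengths
of C¹ paths joining the two points. -/
noncomputable def riemDist {n : ℕ} (P : Euc n → Euc n →L[ℝ] Euc n)
    (a b : Euc n) : ℝ :=
  sInf {L : ℝ | ∃ γ : ℝ → Euc n, ContDiff ℝ 1 γ ∧ γ 0 = a ∧ γ 1 = b ∧
    L = pathLength P γ}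

open MeasureTheory

private lemma integrand_cont {n : ℕ} (P : Euc n → Euc n →L[ℝ] Euc n) (hP : Continuous P)
    {γ : ℝ → Euc n} (hγ : ContDiff ℝ 1 γ) :
    Continuous fun t => Real.sqrt ⟪P (γ t) (deriv γ t), deriv γ t⟫ := by
  have hγ' : Continuous (deriv γ) := hγ.continuous_deriv le_rfl
  exact Real.continuous_sqrt.comp (((hP.comp hγ.continuous).clm_apply hγ').inner hγ')

private lemma pathLength_nonneg {n : ℕ} (P : Euc n → Euc n →L[ℝ] Euc n) (γ : ℝ → Euc n) :
    0 ≤ pathLength P γ :=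
  intervalIntegral.integral_nonneg zero_le_one (fun _ _ => Real.sqrt_nonneg _)

set_option maxHeartbeats 1000000 in
private lemma key_lower {n : ℕ} (P : Euc n → Euc n →L[ℝ] Euc n) (hP : Continuous P)
    (pl : ℝ → ℝ) (hplpos : ∀ s, 0 ≤ s → 0 < pl s) (hpl : AntitoneOn pl (Ici 0))
    (hPlow : ∀ e v : Euc n, pl ‖e‖ * ‖v‖ ^ 2 ≤ ⟪P e v, v⟫)
    (e : Euc n) (γ : ℝ → Euc n) (hγ : ContDiff ℝ 1 γ) (h0 : γ 0 = e) (h1 : γ 1 = 0) :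
    Real.sqrt (pl ‖e‖) * ‖e‖ ≤ pathLength P γ := by
  have hf : Continuous fun t => Real.sqrt ⟪P (γ t) (deriv γ t), deriv γ t⟫ :=
    integrand_cont P hP hγ
  set f : ℝ → ℝ := fun t => Real.sqrt ⟪P (γ t) (deriv γ t), deriv γ t⟫ with hf_def
  have hL0 : 0 ≤ pathLength P γ := pathLength_nonneg P γ
  rcases eq_or_lt_of_le (norm_nonneg e) with hR | hR
  · rw [← hR, mul_zero]; exact hL0
  set R := ‖e‖ with hRdef
  set c := Real.sqrt (pl R) with hcdef
  have hc : 0 < c := Real.sqrt_pos.mpr (hplpos R hR.le)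
  have hpoint : ∀ t, ‖γ t‖ ≤ R → c * ‖deriv γ t‖ ≤ f t := by
    intro t ht
    have h1' : pl R ≤ pl ‖γ t‖ := hpl (mem_Ici.mpr (norm_nonneg _)) (mem_Ici.mpr hR.le) ht
    calc c * ‖deriv γ t‖ = Real.sqrt (pl R * ‖deriv γ t‖ ^ 2) := by
          rw [Real.sqrt_mul' _ (sq_nonneg _), Real.sqrt_sq (norm_nonneg _)]
      _ ≤ f t := by
          apply Real.sqrt_le_sqrt
          calc pl R * ‖deriv γ t‖ ^ 2 ≤ pl ‖γ t‖ * ‖deriv γ t‖ ^ 2 :=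
                mul_le_mul_of_nonneg_right h1' (sq_nonneg _)
            _ ≤ _ := hPlow (γ t) (deriv γ t)
  have main : ∀ ρ : ℝ, 0 < ρ → ρ < R → c * ρ ≤ pathLength P γ := by
    intro ρ hρ0 hρR
    set δ := R - ρ with hδdef
    have hδ : 0 < δ := by simp only [hδdef]; linarith
    have hucont : UniformContinuousOn γ (Icc 0 1) :=
      isCompact_Icc.uniformContinuousOn_of_continuous hγ.continuous.continuousOn
    rw [Metric.uniformContinuousOn_iff] at hucont
    obtain ⟨δ', hδ', hδ'prop⟩ := hucont δ hδ
    obtain ⟨N, hN⟩ := exists_nat_gt (1 / δ')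
    have hNpos : 0 < (N : ℝ) := lt_trans (one_div_pos.mpr hδ') hN
    have h1N : 1 / (N : ℝ) < δ' := by
      rw [div_lt_iff₀ hNpos]
      rw [div_lt_iff₀ hδ'] at hN
      nlinarith
    set s : ℕ → ℝ := fun i => (i : ℝ) / N with hsdef
    have hs_mono : ∀ i : ℕ, s i ≤ s (i + 1) := by
      intro i
      simp only [hsdef]
      gcongr
      push_cast; linarith
    have hs_mem : ∀ i : ℕ, i ≤ N → s i ∈ Icc (0 : ℝ) 1 := by
      intro i hi
      constructor
      · positivity
      · rw [div_le_one hNpos]; exact_mod_cast hi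
    have hgap : ∀ i : ℕ, s (i + 1) - s i = 1 / N := by
      intro i
      simp only [hsdef]
      push_cast
      field_simp
      ring
    have per_i : ∀ i < N, c * (min ‖γ (s i)‖ ρ - min ‖γ (s (i + 1))‖ ρ)
        ≤ ∫ t in s i..s (i + 1), f t := by
      intro i hi
      have hii : s i ≤ s (i + 1) := hs_mono i
      have hInt : IntervalIntegrable f volume (s i) (s (i + 1)) := hf.intervalIntegrable _ _
      have hIntNonneg : 0 ≤ ∫ t in s i..s (i + 1), f t :=
        intervalIntegral.integral_nonneg hii (fun _ _ => Real.sqrt_nonneg _)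
      rcases le_or_gt (min ‖γ (s i)‖ ‖γ (s (i + 1))‖) ρ with hmin | hmin
      · have hnear : ∀ t ∈ Icc (s i) (s (i + 1)), ‖γ t‖ ≤ R := by
          intro t ht
          have htmem : t ∈ Icc (0 : ℝ) 1 :=
            ⟨le_trans (hs_mem i hi.le).1 ht.1, le_trans ht.2 (hs_mem (i + 1) hi).2⟩
          rcases min_le_iff.mp hmin with hj | hj
          · have hd : dist t (s i) < δ' := by
              rw [Real.dist_eq, abs_of_nonneg (by linarith [ht.1])]
              have := hgap i
              linarith [ht.2]
            have hdd := hδ'prop t htmem (s i) (hs_mem i hi.le) hd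
            have h5 : ‖γ t‖ - ‖γ (s i)‖ ≤ ‖γ t - γ (s i)‖ := norm_sub_norm_le _ _
            rw [dist_eq_norm] at hdd
            simp only [hδdef] at hdd ⊢
            linarith
          · have hd : dist t (s (i + 1)) < δ' := by
              rw [Real.dist_eq, abs_of_nonpos (by linarith [ht.2]), neg_sub]
              have := hgap i
              linarith [ht.1]
            have hdd := hδ'prop t htmem (s (i + 1)) (hs_mem (i + 1) hi) hd
            have h5 : ‖γ t‖ - ‖γ (s (i + 1))‖ ≤ ‖γ t - γ (s (i + 1))‖ := norm_sub_norm_le _ _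
            rw [dist_eq_norm] at hdd
            simp only [hδdef] at hdd ⊢
            linarith
        have hlip : min ‖γ (s i)‖ ρ - min ‖γ (s (i + 1))‖ ρ ≤ ‖γ (s i) - γ (s (i + 1))‖ := by
          have habs : |‖γ (s i)‖ - ‖γ (s (i + 1))‖| ≤ ‖γ (s i) - γ (s (i + 1))‖ :=
            abs_norm_sub_norm_le _ _
          rcases le_total (‖γ (s (i + 1))‖) ρ with hb | hb
          · have h6 : min ‖γ (s (i + 1))‖ ρ = ‖γ (s (i + 1))‖ := min_eq_left hb
            have h7 : min ‖γ (s i)‖ ρ ≤ ‖γ (s i)‖ := min_le_left _ _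
            have := le_abs_self (‖γ (s i)‖ - ‖γ (s (i + 1))‖)
            linarith
          · have h6 : min ‖γ (s (i + 1))‖ ρ = ρ := min_eq_right hb
            have h7 : min ‖γ (s i)‖ ρ ≤ ρ := min_le_right _ _
            have := abs_nonneg (‖γ (s i)‖ - ‖γ (s (i + 1))‖)
            linarith
        have hderiv_int : IntervalIntegrable (deriv γ) volume (s i) (s (i + 1)) :=
          (hγ.continuous_deriv le_rfl).intervalIntegrable _ _
        have hftc : γ (s (i + 1)) - γ (s i) = ∫ t in s i..s (i + 1), deriv γ t := by
          rw [intervalIntegral.integral_deriv_eq_sub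
            (fun t _ => (hγ.differentiable one_ne_zero).differentiableAt) hderiv_int]
        have hnormint : ‖γ (s i) - γ (s (i + 1))‖ ≤ ∫ t in s i..s (i + 1), ‖deriv γ t‖ := by
          rw [norm_sub_rev, hftc]
          exact intervalIntegral.norm_integral_le_integral_norm hii
        have hmono : (∫ t in s i..s (i + 1), c * ‖deriv γ t‖) ≤ ∫ t in s i..s (i + 1), f t := by
          apply intervalIntegral.integral_mono_on hii
            ((continuous_const.mul (hγ.continuous_deriv le_rfl).norm).intervalIntegrable _ _)
            hInt
          intro t ht
          exact hpoint t (hnear t ht)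
        calc c * (min ‖γ (s i)‖ ρ - min ‖γ (s (i + 1))‖ ρ)
            ≤ c * ‖γ (s i) - γ (s (i + 1))‖ := mul_le_mul_of_nonneg_left hlip hc.le
          _ ≤ c * ∫ t in s i..s (i + 1), ‖deriv γ t‖ := mul_le_mul_of_nonneg_left hnormint hc.le
          _ = ∫ t in s i..s (i + 1), c * ‖deriv γ t‖ :=
              (intervalIntegral.integral_const_mul c _).symm
          _ ≤ _ := hmono
      · have h6 : min ‖γ (s i)‖ ρ = ρ := min_eq_right (le_of_lt (lt_min_iff.mp hmin).1)
        have h7 : min ‖γ (s (i + 1))‖ ρ = ρ := min_eq_right (le_of_lt (lt_min_iff.mp hmin).2)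
        rw [h6, h7, sub_self, mul_zero]
        exact hIntNonneg
    have htotal : (∑ i ∈ Finset.range N, ∫ t in s i..s (i + 1), f t) = ∫ t in (s 0)..(s N), f t :=
      intervalIntegral.sum_integral_adjacent_intervals (fun i _ => hf.intervalIntegrable _ _)
    have hs0 : s 0 = 0 := by simp [hsdef]
    have hsN : s N = 1 := by
      simp only [hsdef]
      field_simp
    have htel : (∑ i ∈ Finset.range N, (min ‖γ (s i)‖ ρ - min ‖γ (s (i + 1))‖ ρ))
        = min ‖γ (s 0)‖ ρ - min ‖γ (s N)‖ ρ := Finset.sum_range_sub' _ N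
    calc c * ρ
        = c * ∑ i ∈ Finset.range N, (min ‖γ (s i)‖ ρ - min ‖γ (s (i + 1))‖ ρ) := by
          rw [htel, hs0, hsN, h0, h1]
          rw [norm_zero, min_eq_right hρR.le, min_eq_left hρ0.le, sub_zero]
      _ = ∑ i ∈ Finset.range N, c * (min ‖γ (s i)‖ ρ - min ‖γ (s (i + 1))‖ ρ) := by
          rw [Finset.mul_sum]
      _ ≤ ∑ i ∈ Finset.range N, ∫ t in s i..s (i + 1), f t :=
          Finset.sum_le_sum (fun i hi => per_i i (Finset.mem_range.mp hi))
      _ = ∫ t in (s 0)..(s N), f t := htotal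
      _ = pathLength P γ := by rw [hs0, hsN]; rfl
  by_contra hcon
  push_neg at hcon
  have hLc : pathLength P γ / c < R := by
    rw [div_lt_iff₀ hc]
    calc pathLength P γ < c * R := hcon
      _ = R * c := mul_comm _ _
  have hdiv0 : 0 ≤ pathLength P γ / c := div_nonneg hL0 hc.le
  set ρ := (pathLength P γ / c + R) / 2 with hρdef
  have hρ0 : 0 < ρ := by simp only [hρdef]; linarith
  have hρR : ρ < R := by simp only [hρdef]; linarith
  have hmain := main ρ hρ0 hρR
  have h8 : pathLength P γ / c < ρ := by simp only [hρdef]; linarith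
  rw [div_lt_iff₀ hc] at h8
  nlinarith

set_option maxHeartbeats 1000000 in
/-- If P is a continuous symmetric positive definite metric with
p̲(|e|) I ≤ P(e) ≤ p̄(|e|) I, p̲ positive non-increasing and p̄ non-decreasing,
then √(p̲(|e|)) |e| ≤ d_P(e,0) ≤ √(p̄(|e|)) |e|. -/
theorem riemannian_distance_to_origin_bounds
    {n : ℕ}
    (P : Euc n → Euc n →L[ℝ] Euc n) (hP : Continuous P)
    (hPsa : ∀ e, IsSelfAdjoint (P e))
    (hPpos : ∀ (e v : Euc n), v ≠ 0 → 0 < ⟪P e v, v⟫)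
    (pl pu : ℝ → ℝ)
    (hplpos : ∀ s, 0 ≤ s → 0 < pl s)
    (hpl : AntitoneOn pl (Ici 0)) (hpu : MonotoneOn pu (Ici 0))
    (hPbnd : ∀ e v : Euc n,
      pl ‖e‖ * ‖v‖ ^ 2 ≤ ⟪P e v, v⟫ ∧ ⟪P e v, v⟫ ≤ pu ‖e‖ * ‖v‖ ^ 2) :
    ∀ e : Euc n,
      Real.sqrt (pl ‖e‖) * ‖e‖ ≤ riemDist P e 0 ∧
      riemDist P e 0 ≤ Real.sqrt (pu ‖e‖) * ‖e‖ := by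
  intro e
  set γ₀ : ℝ → Euc n := fun s => (1 - s) • e with hγ₀def
  have hγ₀cd : ContDiff ℝ 1 γ₀ := (contDiff_const.sub contDiff_id).smul contDiff_const
  have hγ₀0 : γ₀ 0 = e := by simp [hγ₀def]
  have hγ₀1 : γ₀ 1 = 0 := by simp [hγ₀def]
  have hmem : pathLength P γ₀ ∈ {L : ℝ | ∃ γ : ℝ → Euc n, ContDiff ℝ 1 γ ∧ γ 0 = e ∧ γ 1 = 0 ∧
      L = pathLength P γ} := ⟨γ₀, hγ₀cd, hγ₀0, hγ₀1, rfl⟩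
  have hne : {L : ℝ | ∃ γ : ℝ → Euc n, ContDiff ℝ 1 γ ∧ γ 0 = e ∧ γ 1 = 0 ∧
      L = pathLength P γ}.Nonempty := ⟨_, hmem⟩
  have hbdd : BddBelow {L : ℝ | ∃ γ : ℝ → Euc n, ContDiff ℝ 1 γ ∧ γ 0 = e ∧ γ 1 = 0 ∧
      L = pathLength P γ} := by
    refine ⟨0, ?_⟩
    rintro L ⟨γ, -, -, -, rfl⟩
    exact pathLength_nonneg P γ
  constructor
  · apply le_csInf hne
    rintro L ⟨γ, hcd, hg0, hg1, rfl⟩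
    exact key_lower P hP pl hplpos hpl (fun a v => (hPbnd a v).1) e γ hcd hg0 hg1
  · refine le_trans (csInf_le hbdd hmem) ?_
    have hderiv : ∀ s : ℝ, deriv γ₀ s = -e := by
      intro s
      have h : HasDerivAt γ₀ ((-1 : ℝ) • e) s := by
        have h1 : HasDerivAt (fun s : ℝ => 1 - s) (-1) s := (hasDerivAt_id s).const_sub 1
        exact h1.smul_const e
      have := h.deriv
      simpa using this
    have hbound : ∀ s ∈ Icc (0 : ℝ) 1,
        Real.sqrt ⟪P (γ₀ s) (deriv γ₀ s), deriv γ₀ s⟫ ≤ Real.sqrt (pu ‖e‖) * ‖e‖ := by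
      intro s hs
      rw [hderiv s]
      have hn : ‖γ₀ s‖ ≤ ‖e‖ := by
        simp only [hγ₀def, norm_smul, Real.norm_eq_abs]
        have h1 : |1 - s| ≤ 1 := by rw [abs_le]; constructor <;> linarith [hs.1, hs.2]
        nlinarith [norm_nonneg e]
      have h2 : ⟪P (γ₀ s) (-e), -e⟫ ≤ pu ‖γ₀ s‖ * ‖(-e : Euc n)‖ ^ 2 := (hPbnd (γ₀ s) (-e)).2
      have h3 : pu ‖γ₀ s‖ ≤ pu ‖e‖ :=
        hpu (mem_Ici.mpr (norm_nonneg _)) (mem_Ici.mpr (norm_nonneg _)) hn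
      calc Real.sqrt ⟪P (γ₀ s) (-e), -e⟫ ≤ Real.sqrt (pu ‖e‖ * ‖e‖ ^ 2) := by
            apply Real.sqrt_le_sqrt
            rw [norm_neg] at h2
            nlinarith [sq_nonneg ‖e‖]
        _ = Real.sqrt (pu ‖e‖) * ‖e‖ := by
            rw [Real.sqrt_mul' _ (sq_nonneg _), Real.sqrt_sq (norm_nonneg _)]
    calc pathLength P γ₀ ≤ ∫ _ in (0:ℝ)..1, Real.sqrt (pu ‖e‖) * ‖e‖ := by
          apply intervalIntegral.integral_mono_on zero_le_one
            ((integrand_cont P hP hγ₀cd).intervalIntegrable _ _)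
            intervalIntegrable_const hbound
      _ = Real.sqrt (pu ‖e‖) * ‖e‖ := by simp
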